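/- Let f be an isometric embedding of the 1-Wasserstein space over a countable discrete metric space X. If μ, ν are probability measures with 0 < μ({x}) ≤ ν({x}) for some x ∈ X, then the restriction of f(μ) to S_{f(δ_x)} is dominated pointwise by the restriction of f(ν) to S_{f(δ_x)}. -/

import Mathlib

open scoped ENNReal

/-- Auxiliary structural lemma: if `g w` is a family of probability measures with pairwise
disjoint supports, and `h` is a probability measure with `∑' z, min (h z) (g w z) = μ w`
for a probability vector `μ`, then the mass of `h` on the support of `g w` is exactly `μ w`,
and `h` vanishes outside the union of the supports. -/
private theorem aux_mass {X : Type*} (g : X → X → ℝ≥0∞)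
    (hdisj : ∀ w w' z, w ≠ w' → 0 < g w z → g w' z = 0)
    (h : X → ℝ≥0∞) (hh : ∑' z, h z = 1)
    (μ : X → ℝ≥0∞) (hμ : ∑' w, μ w = 1)
    (hm : ∀ w, ∑' z, min (h z) (g w z) = μ w) :
    (∀ w, ∑' z, Set.indicator {z | 0 < g w z} h z = μ w) ∧
    (∀ z, (∀ w, g w z = 0) → h z = 0) := by
  classical
  set R : Set X := {z | ∀ w, g w z = 0} with hR
  set M : X → ℝ≥0∞ := fun w => ∑' z, Set.indicator {z | 0 < g w z} h z with hM
  have lower : ∀ w, μ w ≤ M w := by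
    intro w
    rw [← hm w]
    apply ENNReal.tsum_le_tsum
    intro z
    by_cases hz : 0 < g w z
    · rw [Set.indicator_of_mem (show z ∈ {z' | 0 < g w z'} from hz)]
      exact min_le_left _ _
    · have h0 : g w z = 0 := by simpa [pos_iff_ne_zero] using hz
      simp [h0]
  have keyz : ∀ z, (∑' w, Set.indicator {z | 0 < g w z} h z) + Set.indicator R h z = h z := by
    intro z
    by_cases hz : ∃ w0, 0 < g w0 z
    · obtain ⟨w0, hw0⟩ := hz
      have hzR : z ∉ R := by
        intro hzR
        have := hzR w0
        simp [this] at hw0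
      rw [Set.indicator_of_notMem hzR, add_zero]
      rw [tsum_eq_single w0]
      · exact Set.indicator_of_mem (show z ∈ {z' | 0 < g w0 z'} from hw0) h
      · intro w hw
        apply Set.indicator_of_notMem
        intro hzw
        exact absurd (hdisj w0 w z (Ne.symm hw) hw0) (by simpa [pos_iff_ne_zero] using hzw)
    · push_neg at hz
      have hzR : z ∈ R := by
        intro w
        simpa [pos_iff_ne_zero] using hz w
      rw [Set.indicator_of_mem hzR]
      have hall : ∀ w, Set.indicator {z | 0 < g w z} h z = 0 := by
        intro w
        exact Set.indicator_of_notMem (by simpa [pos_iff_ne_zero] using hz w) _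
      simp [hall]
  have total : (∑' w, M w) + (∑' z, Set.indicator R h z) = 1 := by
    have h1 : ∑' w, M w = ∑' z, ∑' w, Set.indicator {z | 0 < g w z} h z := ENNReal.tsum_comm
    rw [h1, ← ENNReal.tsum_add, tsum_congr keyz, hh]
  have sum_lower : (1 : ℝ≥0∞) ≤ ∑' w, M w := by
    rw [← hμ]
    exact ENNReal.tsum_le_tsum lower
  have M_le_one : ∑' w, M w ≤ 1 := by
    rw [← total]; exact le_self_add
  have hR0 : ∑' z, Set.indicator R h z = 0 := by
    have h1 : 1 + (∑' z, Set.indicator R h z) ≤ 1 + 0 := by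
      calc 1 + (∑' z, Set.indicator R h z) ≤ (∑' w, M w) + (∑' z, Set.indicator R h z) :=
            add_le_add_left sum_lower _
        _ = 1 := total
        _ = 1 + 0 := (add_zero _).symm
    have := (ENNReal.add_le_add_iff_left ENNReal.one_ne_top).mp h1
    simpa using this
  constructor
  · intro w0
    refine le_antisymm ?_ (lower w0)
    have hc : (∑' w, if w = w0 then 0 else μ w) ≤ 1 := by
      rw [← hμ]
      exact ENNReal.tsum_le_tsum (fun w => by split <;> simp)
    have key2 : M w0 + (∑' w, if w = w0 then 0 else μ w)
        ≤ μ w0 + (∑' w, if w = w0 then 0 else μ w) := by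
      calc M w0 + (∑' w, if w = w0 then 0 else μ w)
          ≤ M w0 + (∑' w, if w = w0 then 0 else M w) := by
            refine add_le_add_right (ENNReal.tsum_le_tsum fun w => ?_) _
            split
            · exact le_rfl
            · exact lower w
        _ = ∑' w, M w := (ENNReal.tsum_eq_add_tsum_ite w0).symm
        _ ≤ 1 := M_le_one
        _ = μ w0 + (∑' w, if w = w0 then 0 else μ w) := by
            rw [← hμ]; exact ENNReal.tsum_eq_add_tsum_ite w0
    exact (ENNReal.add_le_add_iff_right (hc.trans_lt ENNReal.one_lt_top).ne).mp key2
  · intro z hz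
    have hzR : z ∈ R := hz
    have := ENNReal.tsum_eq_zero.mp hR0 z
    rwa [Set.indicator_of_mem hzR] at this

/-- `∑' z, min (ρ z) (δ_w z) = ρ w` for a probability measure `ρ`. -/
private theorem min_delta {X : Type*} [DecidableEq X] (ρ : X → ℝ≥0∞) (hρ : ∑' z, ρ z = 1)
    (w : X) : ∑' z, min (ρ z) (if z = w then 1 else 0) = ρ w := by
  have h1 : ρ w ≤ 1 := by
    rw [← hρ]; exact ENNReal.le_tsum w
  rw [tsum_eq_single w]
  · simp [min_eq_left h1]
  · intro z hz
    simp [hz]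

/-- For an isometric embedding f of the 1-Wasserstein space over a countable
discrete metric space X, if 0 < μ({x}) ≤ ν({x}), then the restriction of f(μ) to the support
of f(δ_x) is dominated pointwise by the restriction of f(ν) to the same set. -/
theorem restriction_monotone {X : Type*} [Countable X] [DecidableEq X]
    (f : (X → ℝ≥0∞) → (X → ℝ≥0∞))
    (hmap : ∀ μ : X → ℝ≥0∞, (∑' x, μ x = 1) → ∑' x, f μ x = 1)
    (hiso : ∀ μ ν : X → ℝ≥0∞, (∑' x, μ x = 1) → (∑' x, ν x = 1) →
      1 - ∑' x, min (f μ x) (f ν x) = 1 - ∑' x, min (μ x) (ν x))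
    (μ ν : X → ℝ≥0∞) (hμ : ∑' x, μ x = 1) (hν : ∑' x, ν x = 1)
    (x : X) (hx : 0 < μ x) (hxy : μ x ≤ ν x) :
    ∀ y : X,
      Set.indicator {z | 0 < f (fun w => if w = x then 1 else 0) z} (f μ) y ≤
      Set.indicator {z | 0 < f (fun w => if w = x then 1 else 0) z} (f ν) y := by
  -- f preserves ∑' min
  have key : ∀ ρ σ : X → ℝ≥0∞, (∑' z, ρ z = 1) → (∑' z, σ z = 1) →
      ∑' z, min (f ρ z) (f σ z) = ∑' z, min (ρ z) (σ z) := by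
    intro ρ σ hρ hσ
    have h1 : ∑' z, min (f ρ z) (f σ z) ≤ 1 := by
      calc ∑' z, min (f ρ z) (f σ z) ≤ ∑' z, f ρ z :=
            ENNReal.tsum_le_tsum fun z => min_le_left _ _
        _ = 1 := hmap ρ hρ
    have h2 : ∑' z, min (ρ z) (σ z) ≤ 1 := by
      calc ∑' z, min (ρ z) (σ z) ≤ ∑' z, ρ z := ENNReal.tsum_le_tsum fun z => min_le_left _ _
        _ = 1 := hρ
    calc ∑' z, min (f ρ z) (f σ z)
        = 1 - (1 - ∑' z, min (f ρ z) (f σ z)) :=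
          (ENNReal.sub_sub_cancel ENNReal.one_ne_top h1).symm
      _ = 1 - (1 - ∑' z, min (ρ z) (σ z)) := by rw [hiso ρ σ hρ hσ]
      _ = ∑' z, min (ρ z) (σ z) := ENNReal.sub_sub_cancel ENNReal.one_ne_top h2
  -- the images of Dirac masses
  set g : X → X → ℝ≥0∞ := fun u => f (fun v => if v = u then 1 else 0) with hgdef
  have hδ : ∀ w : X, ∑' z, (if z = w then (1 : ℝ≥0∞) else 0) = 1 := fun w => tsum_ite_eq w 1
  have hg : ∀ w, ∑' z, g w z = 1 := fun w => hmap _ (hδ w)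
  -- masses of min with images of Diracs
  have hm : ∀ ρ : X → ℝ≥0∞, (∑' z, ρ z = 1) → ∀ w, ∑' z, min (f ρ z) (g w z) = ρ w := by
    intro ρ hρ w
    rw [key ρ _ hρ (hδ w)]
    exact min_delta ρ hρ w
  -- supports of images of Diracs are pairwise disjoint
  have hdisj : ∀ w w' z, w ≠ w' → 0 < g w z → g w' z = 0 := by
    intro w w' z hne hpos
    have h0 : ∑' z, min (g w z) (g w' z) = 0 := by
      rw [key _ _ (hδ w) (hδ w')]
      apply ENNReal.tsum_eq_zero.mpr
      intro z
      by_cases hz : z = w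
      · subst hz
        have : ¬ (z = w') := hne
        simp [this]
      · simp [hz]
    have hmin := ENNReal.tsum_eq_zero.mp h0 z
    rcases le_total (g w z) (g w' z) with hle | hle
    · rw [min_eq_left hle] at hmin
      exact absurd hmin hpos.ne'
    · rwa [min_eq_right hle] at hmin
  obtain ⟨A1μ, A2μ⟩ := aux_mass g hdisj (f μ) (hmap μ hμ) μ hμ (hm μ hμ)
  obtain ⟨A1ν, _⟩ := aux_mass g hdisj (f ν) (hmap ν hν) ν hν (hm ν hν)
  -- abbreviations
  set S : Set X := {z | 0 < g x z} with hSdef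
  set minf : X → ℝ≥0∞ := fun z => min (f μ z) (f ν z) with hminf
  have hm2 : ∑' z, minf z = ∑' z, min (μ z) (ν z) := key μ ν hμ hν
  have hminf_le : ∑' z, minf z ≤ 1 := by
    rw [hm2, ← hμ]
    exact ENNReal.tsum_le_tsum fun z => min_le_left _ _
  -- split the min-sum over S and its complement
  have hsplit : (∑' z, Set.indicator S minf z) + (∑' z, Set.indicator Sᶜ minf z)
      = ∑' z, minf z := by
    rw [← ENNReal.tsum_add]
    exact tsum_congr fun z => Set.indicator_self_add_compl_apply S minf z
  -- bound the complement part
  have hbound : (∑' z, Set.indicator Sᶜ minf z)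
      ≤ ∑' w, (if w = x then 0 else min (μ w) (ν w)) := by
    calc (∑' z, Set.indicator Sᶜ minf z)
        ≤ ∑' z, ∑' w, (if w = x then 0 else Set.indicator {z | 0 < g w z} minf z) := by
          apply ENNReal.tsum_le_tsum
          intro z
          by_cases hzS : 0 < g x z
          · rw [Set.indicator_of_notMem (show z ∉ Sᶜ from Set.not_notMem.mpr hzS)]
            exact zero_le
          · rw [Set.indicator_of_mem ((Set.mem_compl_iff S z).mpr hzS)]
            by_cases hzw : ∃ w0, 0 < g w0 z
            · obtain ⟨w0, hw0⟩ := hzw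
              have hw0x : w0 ≠ x := by
                intro h
                exact hzS (h ▸ hw0)
              calc minf z = (if w0 = x then 0 else Set.indicator {z | 0 < g w0 z} minf z) := by
                    rw [if_neg hw0x,
                      Set.indicator_of_mem (show z ∈ {z' | 0 < g w0 z'} from hw0)]
                _ ≤ _ := ENNReal.le_tsum w0
            · push_neg at hzw
              have hz0 : f μ z = 0 := A2μ z fun w => by simpa [pos_iff_ne_zero] using hzw w
              have : minf z = 0 := by
                rw [hminf]
                simp [hz0]
              rw [this]
              exact zero_le
      _ = ∑' w, ∑' z, (if w = x then 0 else Set.indicator {z | 0 < g w z} minf z) :=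
          ENNReal.tsum_comm
      _ ≤ ∑' w, (if w = x then 0 else min (μ w) (ν w)) := by
          apply ENNReal.tsum_le_tsum
          intro w
          by_cases hw : w = x
          · simp [hw]
          · simp only [if_neg hw]
            apply le_min
            · rw [← A1μ w]
              apply ENNReal.tsum_le_tsum
              intro z
              by_cases hz : z ∈ {z | 0 < g w z}
              · rw [Set.indicator_of_mem hz, Set.indicator_of_mem hz]
                exact min_le_left _ _
              · rw [Set.indicator_of_notMem hz, Set.indicator_of_notMem hz]
            · rw [← A1ν w]
              apply ENNReal.tsum_le_tsum
              intro z
              by_cases hz : z ∈ {z | 0 < g w z}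
              · rw [Set.indicator_of_mem hz, Set.indicator_of_mem hz]
                exact min_le_right _ _
              · rw [Set.indicator_of_notMem hz, Set.indicator_of_notMem hz]
  -- splitting ∑' min (μ,ν) at x
  have hsplitm : ∑' z, min (μ z) (ν z)
      = μ x + ∑' w, (if w = x then 0 else min (μ w) (ν w)) := by
    rw [ENNReal.tsum_eq_add_tsum_ite x, min_eq_left hxy]
    congr 1
    exact tsum_congr fun w => by by_cases hw : w = x <;> simp [hw]
  have hc_fin : (∑' w, (if w = x then 0 else min (μ w) (ν w))) ≤ 1 := by
    rw [← hμ]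
    apply ENNReal.tsum_le_tsum
    intro w
    split
    · exact zero_le
    · exact min_le_left _ _
  -- conclude μ x ≤ mass of minf on S
  have hmain : μ x ≤ ∑' z, Set.indicator S minf z := by
    have h1 : μ x + (∑' w, (if w = x then 0 else min (μ w) (ν w)))
        ≤ (∑' z, Set.indicator S minf z) + (∑' w, (if w = x then 0 else min (μ w) (ν w))) := by
      calc μ x + (∑' w, (if w = x then 0 else min (μ w) (ν w)))
          = ∑' z, minf z := by rw [hm2, hsplitm]
        _ = (∑' z, Set.indicator S minf z) + (∑' z, Set.indicator Sᶜ minf z) := hsplit.symm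
        _ ≤ _ := add_le_add_right hbound _
    exact (ENNReal.add_le_add_iff_right (hc_fin.trans_lt ENNReal.one_lt_top).ne).mp h1
  -- pointwise conclusion
  intro y
  show Set.indicator S (f μ) y ≤ Set.indicator S (f ν) y
  by_cases hy : y ∈ S
  · rw [Set.indicator_of_mem hy, Set.indicator_of_mem hy]
    by_contra hlt
    push_neg at hlt
    have h1 : Set.indicator S minf y < Set.indicator S (f μ) y := by
      rw [Set.indicator_of_mem hy, Set.indicator_of_mem hy, hminf]
      calc min (f μ y) (f ν y) = f ν y := min_eq_right hlt.le
        _ < f μ y := hlt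
    have hle : ∀ z, Set.indicator S minf z ≤ Set.indicator S (f μ) z := by
      intro z
      by_cases hz : z ∈ S
      · rw [Set.indicator_of_mem hz, Set.indicator_of_mem hz]
        exact min_le_left _ _
      · rw [Set.indicator_of_notMem hz, Set.indicator_of_notMem hz]
    have hfin : (∑' z, Set.indicator S minf z) ≠ ⊤ := by
      have : (∑' z, Set.indicator S minf z) ≤ 1 := by
        refine le_trans ?_ hminf_le
        apply ENNReal.tsum_le_tsum
        intro z
        exact Set.indicator_le_self S minf z
      exact (this.trans_lt ENNReal.one_lt_top).ne
    have := ENNReal.tsum_lt_tsum hfin hle h1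
    rw [A1μ x] at this
    exact absurd this (not_lt.mpr hmain)
  · rw [Set.indicator_of_notMem hy, Set.indicator_of_notMem hy]
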